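/- Let x ∈ ℝⁿ be a nonzero vector, y ∈ ℝⁿ, λ ≥ 0, and set s := Σᵢ xᵢ yᵢ and β̂ := sign(s)·max(|s| − λ, 0) / (Σᵢ xᵢ²). Then β̂ minimizes the one-parameter lasso criterion: ½ Σᵢ (yᵢ − xᵢ β̂)² + λ|β̂| ≤ ½ Σᵢ (yᵢ − xᵢ β)² + λ|β| for every β ∈ ℝ. In particular, if s > 0 and 0 ≤ λ ≤ s the minimizer is (s − λ)/Σᵢ xᵢ², if s < 0 and 0 ≤ λ ≤ |s| it is (s + λ)/Σᵢ xᵢ², and if λ ≥ |s| the minimizer is 0. -/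
import Mathlib


open BigOperators

theorem one_parameter_lasso_soft_threshold {n : ℕ}
    (x : Fin n → ℝ) (hx : x ≠ 0) (y : Fin n → ℝ)
    (lam : ℝ) (hlam : 0 ≤ lam)
    (s : ℝ) (hs : s = ∑ i, x i * y i)
    (βhat : ℝ)
    (hβhat : βhat = Real.sign s * max (|s| - lam) 0 / ∑ i, (x i) ^ 2) :
    (∀ β : ℝ,
      (1 / 2) * ∑ i, (y i - x i * βhat) ^ 2 + lam * |βhat|
        ≤ (1 / 2) * ∑ i, (y i - x i * β) ^ 2 + lam * |β|)
    ∧ (0 < s → lam ≤ s → βhat = (s - lam) / ∑ i, (x i) ^ 2)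
    ∧ (s < 0 → lam ≤ |s| → βhat = (s + lam) / ∑ i, (x i) ^ 2)
    ∧ (|s| ≤ lam → βhat = 0) := by
  have hA : 0 < ∑ i, (x i) ^ 2 := by
    rcases Function.ne_iff.mp hx with ⟨i, hi⟩
    exact Finset.sum_pos' (fun j _ => sq_nonneg _)
      ⟨i, Finset.mem_univ i, pow_two_pos_of_ne_zero hi⟩
  set A := ∑ i, (x i) ^ 2 with hAdef
  have hpos : 0 < s → lam ≤ s → βhat = (s - lam) / A := by
    intro h1 h2
    rw [hβhat, Real.sign_of_pos h1, abs_of_pos h1,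
      max_eq_left (by linarith), one_mul]
  have hneg : s < 0 → lam ≤ |s| → βhat = (s + lam) / A := by
    intro h1 h2
    rw [abs_of_neg h1] at h2
    rw [hβhat, Real.sign_of_neg h1, abs_of_neg h1,
      max_eq_left (by linarith)]
    ring
  have hzero : |s| ≤ lam → βhat = 0 := by
    intro h1
    rw [hβhat, max_eq_right (by linarith), mul_zero, zero_div]
  refine ⟨?_, hpos, hneg, hzero⟩
  -- key minimization for g(β) = ½Aβ² - sβ + λ|β|
  have key : ∀ β : ℝ,
      (1/2)*A*βhat^2 - s*βhat + lam*|βhat| ≤ (1/2)*A*β^2 - s*β + lam*|β| := by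
    intro β
    rcases le_or_gt lam |s| with hls | hls
    · rcases lt_trichotomy s 0 with h1 | h1 | h1
      · -- s < 0
        have hb : βhat = (s + lam) / A := hneg h1 hls
        rw [abs_of_neg h1] at hls
        have hb' : βhat ≤ 0 := by
          rw [hb]; apply div_nonpos_of_nonpos_of_nonneg (by linarith) hA.le
        have hAc : A * βhat = s + lam := by
          rw [hb]; field_simp
        rw [abs_of_nonpos hb']
        have h3 : A * βhat ^ 2 = (s + lam) * βhat := by
          rw [pow_two, ← mul_assoc, hAc]
        have hq : A * (β - βhat) ^ 2
            = A * β ^ 2 - 2 * (s + lam) * β + (s + lam) * βhat := by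
          have : A * (β - βhat) ^ 2
              = A * β ^ 2 - 2 * (A * βhat) * β + (A * βhat) * βhat := by ring
          rw [this, hAc]
        have hq' : 0 ≤ A * (β - βhat) ^ 2 := mul_nonneg hA.le (sq_nonneg _)
        have h4 : (0:ℝ) ≤ lam * (|β| + β) :=
          mul_nonneg hlam (by linarith [neg_abs_le β])
        nlinarith [hq, hq', h3, h4]
      · have hl0 : lam = 0 := le_antisymm (by simpa [h1] using hls) hlam
        have hb : βhat = 0 := hzero (by simp [h1, hl0])
        rw [hb, h1, hl0]
        simp
        positivity
      · -- s > 0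
        have hb : βhat = (s - lam) / A := hpos h1 (by rwa [abs_of_pos h1] at hls)
        rw [abs_of_pos h1] at hls
        have hb' : 0 ≤ βhat := by
          rw [hb]; apply div_nonneg (by linarith) hA.le
        have hAc : A * βhat = s - lam := by
          rw [hb]; field_simp
        rw [abs_of_nonneg hb']
        have h3 : A * βhat ^ 2 = (s - lam) * βhat := by
          rw [pow_two, ← mul_assoc, hAc]
        have hq : A * (β - βhat) ^ 2
            = A * β ^ 2 - 2 * (s - lam) * β + (s - lam) * βhat := by
          have : A * (β - βhat) ^ 2
              = A * β ^ 2 - 2 * (A * βhat) * β + (A * βhat) * βhat := by ring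
          rw [this, hAc]
        have hq' : 0 ≤ A * (β - βhat) ^ 2 := mul_nonneg hA.le (sq_nonneg _)
        have h4 : (0:ℝ) ≤ lam * (|β| - β) :=
          mul_nonneg hlam (by linarith [le_abs_self β])
        nlinarith [hq, hq', h3, h4]
    · have hb : βhat = 0 := hzero hls.le
      rw [hb]
      simp only [abs_zero, mul_zero, ne_eq]
      have h1 : s * β ≤ |s| * |β| := (le_abs_self _).trans (abs_mul s β).le
      have h2 : |s| * |β| ≤ lam * |β| :=
        mul_le_mul_of_nonneg_right hls.le (abs_nonneg β)
      nlinarith [mul_nonneg hA.le (sq_nonneg β), h1, h2]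
  intro β
  have expand : ∀ b : ℝ, ∑ i, (y i - x i * b) ^ 2
      = (∑ i, (y i)^2) - 2*b*s + b^2*A := by
    intro b
    rw [hs, hAdef, Finset.mul_sum, Finset.mul_sum, ← Finset.sum_sub_distrib,
      ← Finset.sum_add_distrib]
    exact Finset.sum_congr rfl fun i _ => by ring
  rw [expand βhat, expand β]
  have := key β
  linarith
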